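/- arXiv:2408.02459 — 2 statements merged into one kernel-verified Lean document; each statement's English description precedes it below -/
import Mathlib

section
/- There exist constants C, R > 0 such that for every x' ∈ ℝ², every A' ∈ SL(2,ℝ), and every pair (y, B) with y ∈ ℝ² and B a 2×2 real matrix satisfying Tr(A'^{−1}B) = 0: √(|y|² + |B|²) ≤ C · |A'| · max_{k ∈ ℤ²∖{(0,0)}, |k| ≤ R} | u_k(x')·y + ⟨A'·∇u_k(x'), B⟩ |. -/
open Real

/-- The real Fourier basis function `e_k` on `ℝ²`. -/
noncomputable def eFun (k : ℤ × ℤ) (x : ℝ × ℝ) : ℝ :=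
  if 0 < k.1 ∨ (k.1 = 0 ∧ 0 < k.2) then
    Real.sin ((k.1 : ℝ) * x.1 + (k.2 : ℝ) * x.2)
  else
    Real.cos ((k.1 : ℝ) * x.1 + (k.2 : ℝ) * x.2)

/-- The divergence-free velocity field `u_k := ∇^⊥ Δ^{-1} e_k = -|k|^{-2} ∇^⊥ e_k`,
where `∇^⊥ f = (-∂₂ f, ∂₁ f)`. -/
noncomputable def uFun (k : ℤ × ℤ) (x : ℝ × ℝ) : ℝ × ℝ :=
  (-(((k.1 : ℝ) ^ 2 + (k.2 : ℝ) ^ 2)⁻¹)) •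
    (-(fderiv ℝ (eFun k) x (0, 1)), fderiv ℝ (eFun k) x (1, 0))

/-- The Euclidean dot product on `ℝ²`. -/
def dotR (a b : ℝ × ℝ) : ℝ := a.1 * b.1 + a.2 * b.2

/-- The gradient matrix `∇u_k(x)` with entries `(∇u_k(x))_{ij} = ∂_i (u_k)_j (x)`. -/
noncomputable def gradU (k : ℤ × ℤ) (x : ℝ × ℝ) : Matrix (Fin 2) (Fin 2) ℝ :=
  Matrix.of fun i j =>
    if j = 0 then (fderiv ℝ (uFun k) x (if i = 0 then ((1 : ℝ), (0 : ℝ)) else (0, 1))).1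
    else (fderiv ℝ (uFun k) x (if i = 0 then ((1 : ℝ), (0 : ℝ)) else (0, 1))).2

/-- The Frobenius inner product `⟨M, N⟩ = Tr(MᵀN)` on `2 × 2` real matrices. -/
def frob (M N : Matrix (Fin 2) (Fin 2) ℝ) : ℝ := ∑ i, ∑ j, M i j * N i j

/-- The Frobenius norm of a `2 × 2` real matrix. -/
noncomputable def frobNorm (M : Matrix (Fin 2) (Fin 2) ℝ) : ℝ := Real.sqrt (frob M M)

/-! ### Auxiliary lemmas -/

section Aux

set_option maxHeartbeats 4000000


lemma tau_bound (g11 g22 g12 τ δ σ : ℝ) (hdetG : g11*g22 - g12^2 = 1)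
    (E : (g11+g22)*τ = (g11-g22)*δ - 2*g12*σ) : τ^2 ≤ δ^2 + σ^2 := by
  have hP2 : 4 ≤ (g11+g22)^2 := by nlinarith [sq_nonneg (g11-g22), sq_nonneg g12]
  have hCS : ((g11-g22)*δ - 2*g12*σ)^2 ≤ ((g11-g22)^2+4*g12^2)*(δ^2+σ^2) := by
    nlinarith [sq_nonneg ((g11-g22)*σ + 2*g12*δ)]
  have hId : (g11-g22)^2+4*g12^2 = (g11+g22)^2-4 := by linear_combination (-4)*hdetG
  have key : (g11+g22)^2*τ^2 ≤ ((g11+g22)^2-4)*(δ^2+σ^2) := by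
    rw [← hId]
    calc (g11+g22)^2*τ^2 = ((g11+g22)*τ)^2 := by ring
      _ = ((g11-g22)*δ - 2*g12*σ)^2 := by rw [E]
      _ ≤ _ := hCS
  nlinarith [key, hP2, sq_nonneg δ, sq_nonneg σ, sq_nonneg τ]

lemma betaBound (g11 g22 g12 β11 β12 β21 β22 S : ℝ) (hdetG : g11*g22 - g12^2 = 1)
    (E : g11*β11 + g12*(β12+β21) + g22*β22 = 0)
    (h1 : β12^2 ≤ 2*S^2) (h2 : β21^2 ≤ 2*S^2)
    (h3 : ((-β11+β12-β21+β22)/2)^2 ≤ 2*S^2)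
    (h4 : ((β11+β12-β21-β22)/2)^2 ≤ 2*S^2) :
    β11^2+β12^2+β21^2+β22^2 ≤ 16*S^2 := by
  have htau : (β11+β22)^2 ≤ (β22-β11)^2 + (β12+β21)^2 :=
    tau_bound g11 g22 g12 (β11+β22) (β22-β11) (β12+β21) hdetG (by linear_combination 2*E)
  have hdelta : (β22-β11)^2 ≤ 8*S^2 := by
    nlinarith [h3, h4, sq_nonneg ((-β11+β12-β21+β22)/2 + (β11+β12-β21-β22)/2)]
  have hsigma : (β12+β21)^2 ≤ 8*S^2 := by nlinarith [h1, h2, sq_nonneg (β12-β21)]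
  nlinarith [htau, hdelta, hsigma, h1, h2]

lemma alg (a b c d B11 B12 B21 B22 y1 y2 S : ℝ)
    (hdet : a*d - b*c = 1)
    (htr : d*B11 - c*B12 - b*B21 + a*B22 = 0)
    (h1 : y2^2 + (a*B12 + c*B22)^2 ≤ 2*S^2)
    (h2 : y1^2 + (b*B11 + d*B21)^2 ≤ 2*S^2)
    (h3 : ((-(a*B11+c*B21) + (a*B12+c*B22) - (b*B11+d*B21) + (b*B12+d*B22))/2)^2 ≤ 2*S^2)
    (h4 : (((a*B11+c*B21) + (a*B12+c*B22) - (b*B11+d*B21) - (b*B12+d*B22))/2)^2 ≤ 2*S^2) :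
    y1^2 + y2^2 + (B11^2+B12^2+B21^2+B22^2) ≤ 18*(a^2+b^2+c^2+d^2)*S^2 := by
  have hbeta := betaBound (b^2+d^2) (a^2+c^2) (-(a*b+c*d))
      (a*B11+c*B21) (a*B12+c*B22) (b*B11+d*B21) (b*B12+d*B22) S
      (by linear_combination (a*d-b*c+1)*hdet)
      (by linear_combination (a*d-b*c)*htr)
      (by nlinarith [h1, sq_nonneg y2]) (by nlinarith [h2, sq_nonneg y1]) h3 h4
  have hP : 2 ≤ a^2+b^2+c^2+d^2 := by nlinarith [sq_nonneg (a-d), sq_nonneg (b+c)]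
  have e : B11^2+B12^2+B21^2+B22^2 =
      (d*(a*B11+c*B21) - c*(b*B11+d*B21))^2 + (d*(a*B12+c*B22) - c*(b*B12+d*B22))^2
      + (-b*(a*B11+c*B21) + a*(b*B11+d*B21))^2 + (-b*(a*B12+c*B22) + a*(b*B12+d*B22))^2 := by
    linear_combination (-(B11^2+B12^2+B21^2+B22^2)*(a*d-b*c+1))*hdet
  have hBbound : B11^2+B12^2+B21^2+B22^2 ≤
      (a^2+b^2+c^2+d^2)*((a*B11+c*B21)^2 + (a*B12+c*B22)^2 + (b*B11+d*B21)^2 + (b*B12+d*B22)^2) := by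
    rw [e]
    nlinarith [sq_nonneg (c*(a*B11+c*B21)+d*(b*B11+d*B21)), sq_nonneg (c*(a*B12+c*B22)+d*(b*B12+d*B22)),
      sq_nonneg (a*(a*B11+c*B21)+b*(b*B11+d*B21)), sq_nonneg (a*(a*B12+c*B22)+b*(b*B12+d*B22))]
  have hy : y1^2 + y2^2 ≤ 4*S^2 := by nlinarith [h1, h2, sq_nonneg (a*B12+c*B22), sq_nonneg (b*B11+d*B21)]
  nlinarith [hBbound, hbeta, hy, hP, sq_nonneg S,
    mul_le_mul_of_nonneg_left hbeta (by linarith : (0:ℝ) ≤ a^2+b^2+c^2+d^2)]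

lemma pairIneq (s c fa fb aa bb S : ℝ) (hsc : s^2+c^2 = 1) (ha : |fa| ≤ S) (hb : |fb| ≤ S)
    (h1 : fa = -c*aa + s*bb) (h2 : fb = s*aa + c*bb) : aa^2 + bb^2 ≤ 2*S^2 := by
  obtain ⟨ha1, ha2⟩ := abs_le.mp ha
  obtain ⟨hb1, hb2⟩ := abs_le.mp hb
  have h3 : fa^2 ≤ S^2 := by nlinarith
  have h4 : fb^2 ≤ S^2 := by nlinarith
  have h5 : aa^2+bb^2 = fa^2+fb^2 := by
    rw [h1, h2]; linear_combination (-(aa^2+bb^2))*hsc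
  linarith

noncomputable def Lk (k : ℤ × ℤ) : (ℝ × ℝ) →L[ℝ] ℝ :=
  (k.1 : ℝ) • (ContinuousLinearMap.fst ℝ ℝ ℝ) + (k.2 : ℝ) • (ContinuousLinearMap.snd ℝ ℝ ℝ)

lemma Lk_apply (k : ℤ × ℤ) (v : ℝ × ℝ) : Lk k v = (k.1:ℝ) * v.1 + (k.2:ℝ) * v.2 := rfl

lemma hasFDerivAt_lin (k : ℤ × ℤ) (x : ℝ × ℝ) :
    HasFDerivAt (fun x : ℝ × ℝ => (k.1:ℝ)*x.1 + (k.2:ℝ)*x.2) (Lk k) x :=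
  (hasFDerivAt_fst.const_mul ((k.1:ℝ))).add (hasFDerivAt_snd.const_mul ((k.2:ℝ)))

lemma eFun_sin (k : ℤ × ℤ) (hk : 0 < k.1 ∨ (k.1 = 0 ∧ 0 < k.2)) :
    eFun k = fun x => Real.sin ((k.1:ℝ)*x.1 + (k.2:ℝ)*x.2) := by
  funext x; simp [eFun, hk]

lemma eFun_cos (k : ℤ × ℤ) (hk : ¬(0 < k.1 ∨ (k.1 = 0 ∧ 0 < k.2))) :
    eFun k = fun x => Real.cos ((k.1:ℝ)*x.1 + (k.2:ℝ)*x.2) := by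
  funext x; simp [eFun, hk]

lemma fderiv_eFun_sin (k : ℤ × ℤ) (hk : 0 < k.1 ∨ (k.1 = 0 ∧ 0 < k.2)) (x : ℝ × ℝ) :
    fderiv ℝ (eFun k) x = Real.cos ((k.1:ℝ)*x.1 + (k.2:ℝ)*x.2) • Lk k := by
  rw [eFun_sin k hk]
  exact ((hasFDerivAt_lin k x).sin).fderiv

lemma fderiv_eFun_cos (k : ℤ × ℤ) (hk : ¬(0 < k.1 ∨ (k.1 = 0 ∧ 0 < k.2))) (x : ℝ × ℝ) :
    fderiv ℝ (eFun k) x = (-Real.sin ((k.1:ℝ)*x.1 + (k.2:ℝ)*x.2)) • Lk k := by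
  rw [eFun_cos k hk]
  exact ((hasFDerivAt_lin k x).cos).fderiv

lemma uFun_sin (k : ℤ × ℤ) (hk : 0 < k.1 ∨ (k.1 = 0 ∧ 0 < k.2)) :
    uFun k = fun x => ((((k.1:ℝ)^2+(k.2:ℝ)^2)⁻¹ * Real.cos ((k.1:ℝ)*x.1 + (k.2:ℝ)*x.2) * (k.2:ℝ)),
      -(((k.1:ℝ)^2+(k.2:ℝ)^2)⁻¹ * Real.cos ((k.1:ℝ)*x.1 + (k.2:ℝ)*x.2) * (k.1:ℝ))) := by
  funext x
  rw [uFun, fderiv_eFun_sin k hk]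
  simp [Lk_apply, Prod.smul_mk]
  constructor <;> ring

lemma uFun_cos (k : ℤ × ℤ) (hk : ¬(0 < k.1 ∨ (k.1 = 0 ∧ 0 < k.2))) :
    uFun k = fun x => ((-(((k.1:ℝ)^2+(k.2:ℝ)^2)⁻¹ * Real.sin ((k.1:ℝ)*x.1 + (k.2:ℝ)*x.2) * (k.2:ℝ))),
      (((k.1:ℝ)^2+(k.2:ℝ)^2)⁻¹ * Real.sin ((k.1:ℝ)*x.1 + (k.2:ℝ)*x.2) * (k.1:ℝ))) := by
  funext x
  rw [uFun, fderiv_eFun_cos k hk]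
  simp [Lk_apply, Prod.smul_mk]
  constructor <;> ring

lemma fderiv_uFun_sin (k : ℤ × ℤ) (hk : 0 < k.1 ∨ (k.1 = 0 ∧ 0 < k.2)) (x v : ℝ × ℝ) :
    fderiv ℝ (uFun k) x v =
      (-(((k.1:ℝ)^2+(k.2:ℝ)^2)⁻¹ * Real.sin ((k.1:ℝ)*x.1+(k.2:ℝ)*x.2) * ((k.1:ℝ)*v.1+(k.2:ℝ)*v.2) * (k.2:ℝ)),
       ((k.1:ℝ)^2+(k.2:ℝ)^2)⁻¹ * Real.sin ((k.1:ℝ)*x.1+(k.2:ℝ)*x.2) * ((k.1:ℝ)*v.1+(k.2:ℝ)*v.2) * (k.1:ℝ)) := by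
  have hL := hasFDerivAt_lin k x
  have h1 : HasFDerivAt (fun x : ℝ × ℝ => ((k.1:ℝ)^2+(k.2:ℝ)^2)⁻¹ * Real.cos ((k.1:ℝ)*x.1+(k.2:ℝ)*x.2) * (k.2:ℝ))
      ((k.2:ℝ) • (((k.1:ℝ)^2+(k.2:ℝ)^2)⁻¹ • ((-Real.sin ((k.1:ℝ)*x.1+(k.2:ℝ)*x.2)) • Lk k))) x :=
    (hL.cos.const_mul _).mul_const _
  have h2 : HasFDerivAt (fun x : ℝ × ℝ => -(((k.1:ℝ)^2+(k.2:ℝ)^2)⁻¹ * Real.cos ((k.1:ℝ)*x.1+(k.2:ℝ)*x.2) * (k.1:ℝ)))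
      (-((k.1:ℝ) • (((k.1:ℝ)^2+(k.2:ℝ)^2)⁻¹ • ((-Real.sin ((k.1:ℝ)*x.1+(k.2:ℝ)*x.2)) • Lk k)))) x :=
    ((hL.cos.const_mul _).mul_const _).neg
  have h : HasFDerivAt (uFun k) (ContinuousLinearMap.prod
      ((k.2:ℝ) • (((k.1:ℝ)^2+(k.2:ℝ)^2)⁻¹ • ((-Real.sin ((k.1:ℝ)*x.1+(k.2:ℝ)*x.2)) • Lk k)))
      (-((k.1:ℝ) • (((k.1:ℝ)^2+(k.2:ℝ)^2)⁻¹ • ((-Real.sin ((k.1:ℝ)*x.1+(k.2:ℝ)*x.2)) • Lk k))))) x := by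
    rw [uFun_sin k hk]; exact h1.prodMk h2
  rw [h.fderiv]
  simp [Lk_apply]
  constructor <;> ring

lemma fderiv_uFun_cos (k : ℤ × ℤ) (hk : ¬(0 < k.1 ∨ (k.1 = 0 ∧ 0 < k.2))) (x v : ℝ × ℝ) :
    fderiv ℝ (uFun k) x v =
      (-(((k.1:ℝ)^2+(k.2:ℝ)^2)⁻¹ * Real.cos ((k.1:ℝ)*x.1+(k.2:ℝ)*x.2) * ((k.1:ℝ)*v.1+(k.2:ℝ)*v.2) * (k.2:ℝ)),
       ((k.1:ℝ)^2+(k.2:ℝ)^2)⁻¹ * Real.cos ((k.1:ℝ)*x.1+(k.2:ℝ)*x.2) * ((k.1:ℝ)*v.1+(k.2:ℝ)*v.2) * (k.1:ℝ)) := by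
  have hL := hasFDerivAt_lin k x
  have h1 : HasFDerivAt (fun x : ℝ × ℝ => -(((k.1:ℝ)^2+(k.2:ℝ)^2)⁻¹ * Real.sin ((k.1:ℝ)*x.1+(k.2:ℝ)*x.2) * (k.2:ℝ)))
      (-((k.2:ℝ) • (((k.1:ℝ)^2+(k.2:ℝ)^2)⁻¹ • ((Real.cos ((k.1:ℝ)*x.1+(k.2:ℝ)*x.2)) • Lk k)))) x :=
    ((hL.sin.const_mul _).mul_const _).neg
  have h2 : HasFDerivAt (fun x : ℝ × ℝ => ((k.1:ℝ)^2+(k.2:ℝ)^2)⁻¹ * Real.sin ((k.1:ℝ)*x.1+(k.2:ℝ)*x.2) * (k.1:ℝ))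
      ((k.1:ℝ) • (((k.1:ℝ)^2+(k.2:ℝ)^2)⁻¹ • ((Real.cos ((k.1:ℝ)*x.1+(k.2:ℝ)*x.2)) • Lk k))) x :=
    (hL.sin.const_mul _).mul_const _
  have h : HasFDerivAt (uFun k) (ContinuousLinearMap.prod
      (-((k.2:ℝ) • (((k.1:ℝ)^2+(k.2:ℝ)^2)⁻¹ • ((Real.cos ((k.1:ℝ)*x.1+(k.2:ℝ)*x.2)) • Lk k))))
      ((k.1:ℝ) • (((k.1:ℝ)^2+(k.2:ℝ)^2)⁻¹ • ((Real.cos ((k.1:ℝ)*x.1+(k.2:ℝ)*x.2)) • Lk k)))) x := by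
    rw [uFun_cos k hk]; exact h1.prodMk h2
  rw [h.fderiv]
  simp [Lk_apply]
  constructor <;> ring

lemma key_sin (k : ℤ × ℤ) (hk : 0 < k.1 ∨ (k.1 = 0 ∧ 0 < k.2)) (x' : ℝ × ℝ)
    (A' B : Matrix (Fin 2) (Fin 2) ℝ) (y : ℝ × ℝ) :
    dotR (uFun k x') y + frob (A' * gradU k x') B =
      (((k.1:ℝ)^2+(k.2:ℝ)^2)⁻¹) * (Real.cos ((k.1:ℝ)*x'.1+(k.2:ℝ)*x'.2) * ((k.2:ℝ)*y.1 - (k.1:ℝ)*y.2)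
        + Real.sin ((k.1:ℝ)*x'.1+(k.2:ℝ)*x'.2) *
          ((A' 0 0*(k.1:ℝ) + A' 0 1*(k.2:ℝ)) * (-(k.2:ℝ)*B 0 0 + (k.1:ℝ)*B 0 1)
           + (A' 1 0*(k.1:ℝ) + A' 1 1*(k.2:ℝ)) * (-(k.2:ℝ)*B 1 0 + (k.1:ℝ)*B 1 1))) := by
  have e10 := fderiv_uFun_sin k hk x' (1,0)
  have e01 := fderiv_uFun_sin k hk x' (0,1)
  have hu := congrFun (uFun_sin k hk) x'
  norm_num at e10 e01
  simp only [dotR, frob, gradU, Fin.sum_univ_two, Matrix.mul_apply, Matrix.of_apply]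
  norm_num
  rw [e10, e01, hu]
  norm_num
  ring

lemma key_cos (k : ℤ × ℤ) (hk : ¬(0 < k.1 ∨ (k.1 = 0 ∧ 0 < k.2))) (x' : ℝ × ℝ)
    (A' B : Matrix (Fin 2) (Fin 2) ℝ) (y : ℝ × ℝ) :
    dotR (uFun k x') y + frob (A' * gradU k x') B =
      (((k.1:ℝ)^2+(k.2:ℝ)^2)⁻¹) * (Real.sin ((k.1:ℝ)*x'.1+(k.2:ℝ)*x'.2) * (-(k.2:ℝ)*y.1 + (k.1:ℝ)*y.2)
        + Real.cos ((k.1:ℝ)*x'.1+(k.2:ℝ)*x'.2) *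
          ((A' 0 0*(k.1:ℝ) + A' 0 1*(k.2:ℝ)) * (-(k.2:ℝ)*B 0 0 + (k.1:ℝ)*B 0 1)
           + (A' 1 0*(k.1:ℝ) + A' 1 1*(k.2:ℝ)) * (-(k.2:ℝ)*B 1 0 + (k.1:ℝ)*B 1 1))) := by
  have e10 := fderiv_uFun_cos k hk x' (1,0)
  have e01 := fderiv_uFun_cos k hk x' (0,1)
  have hu := congrFun (uFun_cos k hk) x'
  norm_num at e10 e01
  simp only [dotR, frob, gradU, Fin.sum_univ_two, Matrix.mul_apply, Matrix.of_apply]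
  norm_num
  rw [e10, e01, hu]
  norm_num
  ring

end Aux

set_option maxHeartbeats 4000000 in
/-- **Nondegeneracy of the forcing directions for the Jacobian process.**
There are `C, R > 0` such that for all `x' ∈ ℝ²`, `A' ∈ SL(2,ℝ)`, `y ∈ ℝ²` and `2×2`
matrices `B` with `Tr(A'⁻¹ B) = 0`:
`√(|y|² + |B|²) ≤ C |A'| max_{0<|k|≤R} |u_k(x')·y + ⟨A' ∇u_k(x'), B⟩|`. -/

theorem jacobian_nondegeneracy :
    ∃ C > (0 : ℝ), ∃ R > (0 : ℝ),
      ∀ x' : ℝ × ℝ, ∀ A' : Matrix (Fin 2) (Fin 2) ℝ, A'.det = 1 →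
      ∀ y : ℝ × ℝ, ∀ B : Matrix (Fin 2) (Fin 2) ℝ, Matrix.trace (A'⁻¹ * B) = 0 →
      Real.sqrt (y.1 ^ 2 + y.2 ^ 2 + frob B B) ≤ C * frobNorm A' *
        sSup {t | ∃ k : ℤ × ℤ, k ≠ 0 ∧ (k.1 : ℝ) ^ 2 + (k.2 : ℝ) ^ 2 ≤ R ^ 2 ∧
          t = |dotR (uFun k x') y + frob (A' * gradU k x') B|} := by
  refine ⟨6, by norm_num, 2, by norm_num, ?_⟩
  intro x' A' hdet y B htrace
  -- the sup set
  have hbdd : BddAbove {t | ∃ k : ℤ × ℤ, k ≠ 0 ∧ (k.1 : ℝ) ^ 2 + (k.2 : ℝ) ^ 2 ≤ (2:ℝ) ^ 2 ∧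
      t = |dotR (uFun k x') y + frob (A' * gradU k x') B|} := by
    have hsub : {t | ∃ k : ℤ × ℤ, k ≠ 0 ∧ (k.1 : ℝ) ^ 2 + (k.2 : ℝ) ^ 2 ≤ (2:ℝ) ^ 2 ∧
        t = |dotR (uFun k x') y + frob (A' * gradU k x') B|} ⊆
        (fun k : ℤ × ℤ => |dotR (uFun k x') y + frob (A' * gradU k x') B|) ''
          (Set.Icc ((-2,-2) : ℤ × ℤ) (2,2)) := by
      rintro t ⟨k, hk0, hkle, rfl⟩
      refine ⟨k, ?_, rfl⟩
      have h1 : (k.1:ℝ)^2 ≤ 4 := by nlinarith [sq_nonneg (k.2:ℝ)]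
      have h2 : (k.2:ℝ)^2 ≤ 4 := by nlinarith [sq_nonneg (k.1:ℝ)]
      have e1 : -2 ≤ k.1 := by exact_mod_cast (by nlinarith : (-2:ℝ) ≤ (k.1:ℝ))
      have e2 : k.1 ≤ 2 := by exact_mod_cast (by nlinarith : (k.1:ℝ) ≤ 2)
      have e3 : -2 ≤ k.2 := by exact_mod_cast (by nlinarith : (-2:ℝ) ≤ (k.2:ℝ))
      have e4 : k.2 ≤ 2 := by exact_mod_cast (by nlinarith : (k.2:ℝ) ≤ 2)
      exact Set.mem_Icc.mpr ⟨⟨e1, e3⟩, ⟨e2, e4⟩⟩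
    exact (((Set.finite_Icc _ _).image _).subset hsub).bddAbove
  set S := sSup {t | ∃ k : ℤ × ℤ, k ≠ 0 ∧ (k.1 : ℝ) ^ 2 + (k.2 : ℝ) ^ 2 ≤ (2:ℝ) ^ 2 ∧
      t = |dotR (uFun k x') y + frob (A' * gradU k x') B|} with hSdef
  have hle : ∀ k : ℤ × ℤ, k ≠ 0 → (k.1 : ℝ) ^ 2 + (k.2 : ℝ) ^ 2 ≤ (2:ℝ) ^ 2 →
      |dotR (uFun k x') y + frob (A' * gradU k x') B| ≤ S :=
    fun k h1 h2 => le_csSup hbdd ⟨k, h1, h2, rfl⟩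
  have l10 := hle (1,0) (by decide) (by norm_num)
  have lm10 := hle (-1,0) (by decide) (by norm_num)
  have l01 := hle (0,1) (by decide) (by norm_num)
  have l0m1 := hle (0,-1) (by decide) (by norm_num)
  have l11 := hle (1,1) (by decide) (by norm_num)
  have lm1m1 := hle (-1,-1) (by decide) (by norm_num)
  have l1m1 := hle (1,-1) (by decide) (by norm_num)
  have lm11 := hle (-1,1) (by decide) (by norm_num)
  have hS0 : 0 ≤ S := le_trans (abs_nonneg _) l10
  -- pair inequalities
  have P1 : y.2^2 + (A' 0 0 * B 0 1 + A' 1 0 * B 1 1)^2 ≤ 2*S^2 := by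
    refine pairIneq (Real.sin x'.1) (Real.cos x'.1) _ _ _ _ S (Real.sin_sq_add_cos_sq x'.1)
      l10 lm10 ?_ ?_
    · rw [key_sin ((1,0) : ℤ × ℤ) (by norm_num) x' A' B y]
      push_cast; norm_num
    · rw [key_cos ((-1,0) : ℤ × ℤ) (by norm_num) x' A' B y]
      rw [show (((((-1,0) : ℤ × ℤ)).1:ℝ)*x'.1 + ((((-1,0) : ℤ × ℤ)).2:ℝ)*x'.2) = -x'.1 from by
        push_cast; ring]
      rw [Real.sin_neg, Real.cos_neg]
      push_cast; ring
  have P2 : y.1^2 + (A' 0 1 * B 0 0 + A' 1 1 * B 1 0)^2 ≤ 2*S^2 := by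
    refine pairIneq (Real.sin x'.2) (Real.cos x'.2)
      (-(dotR (uFun ((0,1) : ℤ × ℤ) x') y + frob (A' * gradU ((0,1) : ℤ × ℤ) x') B))
      (-(dotR (uFun ((0,-1) : ℤ × ℤ) x') y + frob (A' * gradU ((0,-1) : ℤ × ℤ) x') B))
      _ _ S (Real.sin_sq_add_cos_sq x'.2)
      (by rw [abs_neg]; exact l01) (by rw [abs_neg]; exact l0m1) ?_ ?_
    · rw [key_sin ((0,1) : ℤ × ℤ) (by norm_num) x' A' B y]
      rw [show (((((0,1) : ℤ × ℤ)).1:ℝ)*x'.1 + ((((0,1) : ℤ × ℤ)).2:ℝ)*x'.2) = x'.2 from by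
        push_cast; ring]
      push_cast; ring
    · rw [key_cos ((0,-1) : ℤ × ℤ) (by norm_num) x' A' B y]
      rw [show (((((0,-1) : ℤ × ℤ)).1:ℝ)*x'.1 + ((((0,-1) : ℤ × ℤ)).2:ℝ)*x'.2) = -x'.2 from by
        push_cast; ring]
      rw [Real.sin_neg, Real.cos_neg]
      push_cast; ring
  have P3 : ((y.2-y.1)/2)^2 + (((A' 0 0 + A' 0 1) * (-B 0 0 + B 0 1)
      + (A' 1 0 + A' 1 1) * (-B 1 0 + B 1 1))/2)^2 ≤ 2*S^2 := by
    refine pairIneq (Real.sin (x'.1+x'.2)) (Real.cos (x'.1+x'.2)) _ _ _ _ S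
      (Real.sin_sq_add_cos_sq _) l11 lm1m1 ?_ ?_
    · rw [key_sin ((1,1) : ℤ × ℤ) (by norm_num) x' A' B y]
      rw [show (((((1,1) : ℤ × ℤ)).1:ℝ)*x'.1 + ((((1,1) : ℤ × ℤ)).2:ℝ)*x'.2) = x'.1+x'.2 from by
        push_cast; ring]
      push_cast; ring
    · rw [key_cos ((-1,-1) : ℤ × ℤ) (by norm_num) x' A' B y]
      rw [show (((((-1,-1) : ℤ × ℤ)).1:ℝ)*x'.1 + ((((-1,-1) : ℤ × ℤ)).2:ℝ)*x'.2) = -(x'.1+x'.2) from by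
        push_cast; ring]
      rw [Real.sin_neg, Real.cos_neg]
      push_cast; ring
  have P4 : ((y.1+y.2)/2)^2 + (((A' 0 0 - A' 0 1) * (B 0 0 + B 0 1)
      + (A' 1 0 - A' 1 1) * (B 1 0 + B 1 1))/2)^2 ≤ 2*S^2 := by
    refine pairIneq (Real.sin (x'.1-x'.2)) (Real.cos (x'.1-x'.2)) _ _ _ _ S
      (Real.sin_sq_add_cos_sq _) l1m1 lm11 ?_ ?_
    · rw [key_sin ((1,-1) : ℤ × ℤ) (by norm_num) x' A' B y]
      rw [show (((((1,-1) : ℤ × ℤ)).1:ℝ)*x'.1 + ((((1,-1) : ℤ × ℤ)).2:ℝ)*x'.2) = x'.1-x'.2 from by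
        push_cast; ring]
      push_cast; ring
    · rw [key_cos ((-1,1) : ℤ × ℤ) (by norm_num) x' A' B y]
      rw [show (((((-1,1) : ℤ × ℤ)).1:ℝ)*x'.1 + ((((-1,1) : ℤ × ℤ)).2:ℝ)*x'.2) = -(x'.1-x'.2) from by
        push_cast; ring]
      rw [Real.sin_neg, Real.cos_neg]
      push_cast; ring
  -- unpack determinant and trace conditions
  have hdet' : A' 0 0 * A' 1 1 - A' 0 1 * A' 1 0 = 1 := by
    rwa [Matrix.det_fin_two] at hdet
  have htr' : A' 1 1 * B 0 0 - A' 1 0 * B 0 1 - A' 0 1 * B 1 0 + A' 0 0 * B 1 1 = 0 := by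
    rw [Matrix.inv_def, hdet, Ring.inverse_one, one_smul, Matrix.adjugate_fin_two] at htrace
    simp only [Matrix.trace_fin_two, Matrix.mul_apply, Fin.sum_univ_two, Matrix.of_apply,
      Matrix.cons_val', Matrix.cons_val_zero, Matrix.cons_val_one, Matrix.head_cons,
      Matrix.empty_val', Matrix.cons_val_fin_one, Matrix.head_fin_const] at htrace
    linarith [htrace]
  -- main algebraic bound
  have main := alg (A' 0 0) (A' 0 1) (A' 1 0) (A' 1 1) (B 0 0) (B 0 1) (B 1 0) (B 1 1)
    y.1 y.2 S hdet' htr' P1 P2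
    (by nlinarith [P3, sq_nonneg ((y.2-y.1)/2)])
    (by nlinarith [P4, sq_nonneg ((y.1+y.2)/2)])
  -- conclude
  have hfrobA : frob A' A' = A' 0 0^2 + A' 0 1^2 + A' 1 0^2 + A' 1 1^2 := by
    simp only [frob, Fin.sum_univ_two]; ring
  have hfrobB : frob B B = B 0 0^2 + B 0 1^2 + B 1 0^2 + B 1 1^2 := by
    simp only [frob, Fin.sum_univ_two]; ring
  have hfA0 : 0 ≤ frob A' A' := by rw [hfrobA]; positivity
  have hRHS0 : 0 ≤ 6 * frobNorm A' * S :=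
    mul_nonneg (mul_nonneg (by norm_num) (Real.sqrt_nonneg _)) hS0
  have hsq : (6 * frobNorm A' * S)^2 = 36 * frob A' A' * S^2 := by
    rw [frobNorm, mul_pow, mul_pow, Real.sq_sqrt hfA0]; ring
  calc Real.sqrt (y.1 ^ 2 + y.2 ^ 2 + frob B B)
      ≤ Real.sqrt ((6 * frobNorm A' * S)^2) := by
        apply Real.sqrt_le_sqrt
        rw [hsq, hfrobA, hfrobB]
        nlinarith [main, mul_nonneg (show (0:ℝ) ≤ A' 0 0^2 + A' 0 1^2 + A' 1 0^2 + A' 1 1^2 by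
          positivity) (sq_nonneg S)]
    _ = 6 * frobNorm A' * S := Real.sqrt_sq hRHS0
end

section
/- Let T > 0, α ∈ (0,1], and let f : [0,T] → ℝ be differentiable with α-Hölder continuous derivative f'. Then ‖f'‖_{C⁰} ≤ (8/T)·‖f‖_{C⁰} + 8·‖f‖_{C⁰}^{α/(1+α)} · ‖f'‖_{C^α}^{1/(1+α)}. -/
open Set

lemma key_bound (T α : ℝ) (hT : 0 < T) (hα0 : 0 < α) (f f' : ℝ → ℝ)
    (hderiv : ∀ t ∈ Icc (0:ℝ) T, HasDerivWithinAt f (f' t) (Icc (0:ℝ) T) t)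
    (M0 S : ℝ) (hS : 0 ≤ S)
    (hM0 : ∀ t ∈ Icc (0:ℝ) T, |f t| ≤ M0)
    (hSb : ∀ s ∈ Icc (0:ℝ) T, ∀ t ∈ Icc (0:ℝ) T, |f' s - f' t| ≤ S * |s - t| ^ α)
    (t : ℝ) (ht : t ∈ Icc (0:ℝ) T) (h : ℝ) (hh0 : 0 < h) (hhT : h ≤ T / 2) :
    |f' t| ≤ 2 * M0 / h + S * h ^ α := by
  obtain ⟨u, hu, hdist⟩ : ∃ u ∈ Icc (0:ℝ) T, |u - t| = h := by
    rcases le_or_gt t (T / 2) with hc | hc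
    · exact ⟨t + h, ⟨by linarith [ht.1], by linarith⟩, by rw [add_sub_cancel_left, abs_of_pos hh0]⟩
    · exact ⟨t - h, ⟨by linarith, by linarith [ht.2]⟩, by
        rw [sub_sub_cancel_left, abs_neg, abs_of_pos hh0]⟩
  set J : Set ℝ := Icc (min t u) (max t u) with hJdef
  have hJsub : J ⊆ Icc (0:ℝ) T := by
    apply Icc_subset_Icc
    · exact le_min ht.1 hu.1
    · exact max_le ht.2 hu.2
  have hderivJ : ∀ x ∈ J, HasDerivWithinAt (fun y => f y - f' t * y) (f' x - f' t) J x := by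
    intro x hx
    have := ((hderiv x (hJsub hx)).mono hJsub).sub
      ((hasDerivWithinAt_id x J).const_mul (f' t))
    simp only [id_eq, mul_one] at this
    exact this
  have hbound : ∀ x ∈ J, ‖f' x - f' t‖ ≤ S * h ^ α := by
    intro x hx
    rw [Real.norm_eq_abs]
    refine (hSb x (hJsub hx) t ht).trans ?_
    apply mul_le_mul_of_nonneg_left _ hS
    apply Real.rpow_le_rpow (abs_nonneg _) _ hα0.le
    rw [← hdist]
    rcases le_total t u with h1 | h1
    · have e : |u - t| = u - t := abs_of_nonneg (by linarith)
      have hx2 := hx.2; rw [sup_eq_right.mpr h1] at hx2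
      have hx1 := hx.1; rw [inf_eq_left.mpr h1] at hx1
      rw [e, abs_sub_le_iff]; constructor <;> linarith
    · have e : |u - t| = t - u := by rw [abs_of_nonpos (by linarith : u - t ≤ 0)]; ring
      have hx2 := hx.2; rw [sup_eq_left.mpr h1] at hx2
      have hx1 := hx.1; rw [inf_eq_right.mpr h1] at hx1
      rw [e, abs_sub_le_iff]; constructor <;> linarith
  have htJ : t ∈ J := ⟨min_le_left _ _, le_max_left _ _⟩
  have huJ : u ∈ J := ⟨min_le_right _ _, le_max_right _ _⟩
  have key := Convex.norm_image_sub_le_of_norm_hasDerivWithin_le hderivJ hbound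
    (convex_Icc _ _) htJ huJ
  rw [Real.norm_eq_abs, Real.norm_eq_abs, hdist] at key
  have h1 : |f' t| * h ≤ 2 * M0 + S * h ^ α * h := by
    have e1 : |f' t * (u - t)| = |f' t| * h := by rw [abs_mul, hdist]
    have e2 : |f' t * (u - t)| ≤ |f u - f' t * u - (f t - f' t * t)| + |f u| + |f t| := by
      have e3 : f' t * (u - t) = -(f u - f' t * u - (f t - f' t * t)) + f u - f t := by ring
      rw [e3]
      calc |(-(f u - f' t * u - (f t - f' t * t)) + f u - f t)|
          ≤ |(-(f u - f' t * u - (f t - f' t * t)) + f u)| + |f t| := abs_sub _ _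
        _ ≤ |(-(f u - f' t * u - (f t - f' t * t)))| + |f u| + |f t| := by
            linarith [abs_add_le (-(f u - f' t * u - (f t - f' t * t))) (f u)]
        _ = |f u - f' t * u - (f t - f' t * t)| + |f u| + |f t| := by rw [abs_neg]
    rw [e1] at e2
    linarith [key, hM0 u hu, hM0 t ht]
  calc |f' t| = |f' t| * h / h := by field_simp
    _ ≤ (2 * M0 + S * h ^ α * h) / h := by gcongr
    _ = 2 * M0 / h + S * h ^ α := by field_simp

/-- **An interpolation inequality for Hölder-continuous derivatives.**
If `f : [0,T] → ℝ` is differentiable with `α`-Hölder continuous derivative `f'`, then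
`‖f'‖_{C⁰} ≤ (8/T) ‖f‖_{C⁰} + 8 ‖f‖_{C⁰}^{α/(1+α)} ‖f'‖_{C^α}^{1/(1+α)}`,
where `‖g‖_{C⁰} = sup_{[0,T]} |g|` and
`‖g‖_{C^α} = ‖g‖_{C⁰} + sup_{s ≠ t} |g(s) - g(t)|/|s - t|^α`. -/
theorem holder_interpolation_deriv
    (T α : ℝ) (hT : 0 < T) (hα0 : 0 < α) (hα1 : α ≤ 1)
    (f f' : ℝ → ℝ)
    (hderiv : ∀ t ∈ Icc (0:ℝ) T, HasDerivWithinAt f (f' t) (Icc (0:ℝ) T) t)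
    (hHolder : ∃ H : ℝ, ∀ s ∈ Icc (0:ℝ) T, ∀ t ∈ Icc (0:ℝ) T,
      |f' s - f' t| ≤ H * |s - t| ^ α) :
    sSup ((fun t => |f' t|) '' Icc (0:ℝ) T) ≤
      8 / T * sSup ((fun t => |f t|) '' Icc (0:ℝ) T) +
      8 * (sSup ((fun t => |f t|) '' Icc (0:ℝ) T)) ^ (α / (1 + α)) *
        (sSup ((fun t => |f' t|) '' Icc (0:ℝ) T) +
          sSup {q | ∃ s ∈ Icc (0:ℝ) T, ∃ t ∈ Icc (0:ℝ) T, s ≠ t ∧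
            q = |f' s - f' t| / |s - t| ^ α}) ^ (1 / (1 + α)) := by
  obtain ⟨H, hH⟩ := hHolder
  have hIcc : (Icc (0:ℝ) T).Nonempty := nonempty_Icc.mpr hT.le
  have h0T : (0:ℝ) ∈ Icc (0:ℝ) T := ⟨le_refl _, hT.le⟩
  have hTT : T ∈ Icc (0:ℝ) T := ⟨hT.le, le_refl _⟩
  have h1α : (0:ℝ) < 1 + α := by linarith
  -- M0 : sup of |f|
  set M0 := sSup ((fun t => |f t|) '' Icc (0:ℝ) T) with hM0def
  have hfc : ContinuousOn f (Icc (0:ℝ) T) := fun t ht => (hderiv t ht).continuousWithinAt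
  have hbddf : BddAbove ((fun t => |f t|) '' Icc (0:ℝ) T) :=
    (isCompact_Icc.image_of_continuousOn (hfc.abs)).bddAbove
  have hM0 : ∀ t ∈ Icc (0:ℝ) T, |f t| ≤ M0 := fun t ht =>
    le_csSup hbddf (mem_image_of_mem _ ht)
  have hM0nn : 0 ≤ M0 := le_trans (abs_nonneg _) (hM0 0 h0T)
  -- S : sup of Hölder quotients
  set Q := {q | ∃ s ∈ Icc (0:ℝ) T, ∃ t ∈ Icc (0:ℝ) T, s ≠ t ∧
      q = |f' s - f' t| / |s - t| ^ α} with hQdef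
  set S := sSup Q with hSdef
  have hQbdd : BddAbove Q := by
    refine ⟨H, fun q hq => ?_⟩
    obtain ⟨s, hs, t, ht, hst, rfl⟩ := hq
    rw [div_le_iff₀ (Real.rpow_pos_of_pos (abs_pos.mpr (sub_ne_zero.mpr hst)) α)]
    exact hH s hs t ht
  have hQne : Q.Nonempty := ⟨|f' 0 - f' T| / |0 - T| ^ α,
    ⟨0, h0T, T, hTT, hT.ne, rfl⟩⟩
  have hSnn : 0 ≤ S := by
    obtain ⟨q, hq⟩ := hQne
    refine le_trans ?_ (le_csSup hQbdd hq)
    obtain ⟨s, hs, t, ht, hst, rfl⟩ := hq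
    positivity
  have hSb : ∀ s ∈ Icc (0:ℝ) T, ∀ t ∈ Icc (0:ℝ) T, |f' s - f' t| ≤ S * |s - t| ^ α := by
    intro s hs t ht
    rcases eq_or_ne s t with rfl | hst
    · simp [Real.zero_rpow hα0.ne']
    · have hpos : (0:ℝ) < |s - t| ^ α :=
        Real.rpow_pos_of_pos (abs_pos.mpr (sub_ne_zero.mpr hst)) α
      have : |f' s - f' t| / |s - t| ^ α ≤ S :=
        le_csSup hQbdd ⟨s, hs, t, ht, hst, rfl⟩
      calc |f' s - f' t| = |f' s - f' t| / |s - t| ^ α * |s - t| ^ α := by field_simp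
        _ ≤ S * |s - t| ^ α := by gcongr
  -- M1 : sup of |f'|
  set M1 := sSup ((fun t => |f' t|) '' Icc (0:ℝ) T) with hM1def
  have hbddf' : BddAbove ((fun t => |f' t|) '' Icc (0:ℝ) T) := by
    refine ⟨|f' 0| + S * T ^ α, ?_⟩
    rintro _ ⟨t, ht, rfl⟩
    have h1 : |f' t - f' 0| ≤ S * |t - 0| ^ α := hSb t ht 0 h0T
    have h2 : |t - 0| ^ α ≤ T ^ α := by
      apply Real.rpow_le_rpow (abs_nonneg _) _ hα0.le
      rw [sub_zero, abs_of_nonneg ht.1]; exact ht.2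
    calc |f' t| ≤ |f' t - f' 0| + |f' 0| := by
          simpa using abs_add_le (f' t - f' 0) (f' 0)
      _ ≤ |f' 0| + S * T ^ α := by nlinarith
  have hf'ne : ((fun t => |f' t|) '' Icc (0:ℝ) T).Nonempty := hIcc.image _
  have hM1 : ∀ t ∈ Icc (0:ℝ) T, |f' t| ≤ M1 := fun t ht =>
    le_csSup hbddf' (mem_image_of_mem _ ht)
  have hM1nn : 0 ≤ M1 := le_trans (abs_nonneg _) (hM1 0 h0T)
  -- abbreviations
  set B := M1 + S with hBdef
  have hBnn : 0 ≤ B := by positivity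
  have hRHS2nn : 0 ≤ 8 * M0 ^ (α / (1 + α)) * B ^ (1 / (1 + α)) := by positivity
  -- trivial case M0 = 0 : f vanishes, hence f' vanishes
  rcases eq_or_lt_of_le hM0nn with hM0z | hM0pos
  · have hfz : ∀ t ∈ Icc (0:ℝ) T, f t = 0 := by
      intro t ht
      have := hM0 t ht
      rw [← hM0z] at this
      exact abs_nonpos_iff.mp this
    have hf'z : ∀ t ∈ Icc (0:ℝ) T, f' t = 0 := by
      intro t ht
      have h1 : HasDerivWithinAt (fun _ : ℝ => (0:ℝ)) (f' t) (Icc (0:ℝ) T) t :=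
        (hderiv t ht).congr (fun y hy => (hfz y hy).symm) (hfz t ht).symm
      have h2 : HasDerivWithinAt (fun _ : ℝ => (0:ℝ)) 0 (Icc (0:ℝ) T) t :=
        hasDerivWithinAt_const _ _ _
      exact ((uniqueDiffOn_Icc hT) t ht).eq_deriv _ h1 h2
    have hM1z : M1 ≤ 0 := by
      apply csSup_le hf'ne
      rintro _ ⟨t, ht, rfl⟩
      show |f' t| ≤ 0
      rw [hf'z t ht]; simp
    have hx : 0 ≤ 8 / T * M0 := by positivity
    linarith
  rcases eq_or_lt_of_le hBnn with hBz | hBpos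
  · have hM1z : M1 ≤ 0 := by linarith
    have hx : 0 ≤ 8 / T * M0 := by positivity
    linarith
  -- main case : M0 > 0, B > 0
  set c := 1 / (1 + α) with hcdef
  set e := α / (1 + α) with hedef
  have hce : c + e = 1 := by rw [hcdef, hedef]; field_simp
  have hcpos : 0 < c := by positivity
  have hepos : 0 < e := by positivity
  set hs := (M0 / B) ^ c with hhsdef
  have hMBpos : 0 < M0 / B := div_pos hM0pos hBpos
  have hhs : 0 < hs := Real.rpow_pos_of_pos hMBpos c
  have hXnn : 0 ≤ M0 ^ e * B ^ c := by positivity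
  have hSleB : S ≤ B := by rw [hBdef]; linarith
  have id1 : hs * (M0 ^ e * B ^ c) = M0 := by
    rw [hhsdef]
    calc (M0 / B) ^ c * (M0 ^ e * B ^ c)
        = (M0 ^ c / B ^ c) * (M0 ^ e * B ^ c) := by
          rw [Real.div_rpow hM0nn hBnn]
      _ = (M0 ^ c * M0 ^ e) * (B ^ c / B ^ c) := by ring
      _ = M0 ^ (c + e) * 1 := by
          rw [← Real.rpow_add hM0pos, div_self (ne_of_gt (Real.rpow_pos_of_pos hBpos c))]
      _ = M0 := by rw [hce, Real.rpow_one, mul_one]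
  rcases le_or_gt hs (T / 2) with hcase | hcase
  · -- optimal h fits inside the interval
    have id2 : hs ^ α = (M0 / B) ^ e := by
      rw [hhsdef, ← Real.rpow_mul hMBpos.le]
      congr 1
      rw [hcdef, hedef]
      ring
    have id3 : B * (M0 / B) ^ e = M0 ^ e * B ^ c := by
      have hc1e : c = 1 - e := by linarith
      calc B * (M0 / B) ^ e = B * (M0 ^ e / B ^ e) := by rw [Real.div_rpow hM0nn hBnn]
        _ = M0 ^ e * (B ^ (1:ℝ) / B ^ e) := by rw [Real.rpow_one]; ring
        _ = M0 ^ e * B ^ (1 - e) := by rw [← Real.rpow_sub hBpos]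
        _ = M0 ^ e * B ^ c := by rw [hc1e]
    have id4 : 2 * M0 / hs = 2 * (M0 ^ e * B ^ c) := by
      have hq : M0 = M0 ^ e * B ^ c * hs := by linear_combination -id1
      rw [mul_div_assoc]
      congr 1
      rw [div_eq_iff hhs.ne']
      exact hq
    have hpt : ∀ t ∈ Icc (0:ℝ) T, |f' t| ≤ 3 * (M0 ^ e * B ^ c) := by
      intro t ht
      have := key_bound T α hT hα0 f f' hderiv M0 S hSnn hM0 hSb t ht hs hhs hcase
      have h2 : S * hs ^ α ≤ M0 ^ e * B ^ c := by
        calc S * hs ^ α ≤ B * hs ^ α := by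
              apply mul_le_mul_of_nonneg_right hSleB (Real.rpow_nonneg hhs.le α)
          _ = M0 ^ e * B ^ c := by rw [id2, id3]
      rw [id4] at this
      linarith [this, h2]
    have hM1le : M1 ≤ 3 * (M0 ^ e * B ^ c) := by
      apply csSup_le hf'ne
      rintro _ ⟨t, ht, rfl⟩
      exact hpt t ht
    have hx : 0 ≤ 8 / T * M0 := by positivity
    linarith
  · -- T/2 smaller than the optimal h
    have ht2 : 0 < T / 2 := by linarith
    have hlt : (T / 2) ^ (1 + α) < M0 / B := by
      have h1 : (T / 2) ^ (1 + α) < hs ^ (1 + α) :=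
        Real.rpow_lt_rpow ht2.le hcase h1α
      have h2 : hs ^ (1 + α) = M0 / B := by
        rw [hhsdef, ← Real.rpow_mul hMBpos.le]
        have : c * (1 + α) = 1 := by rw [hcdef]; field_simp
        rw [this, Real.rpow_one]
      rwa [h2] at h1
    have hrr : (T / 2) ^ (1 + α) = (T / 2) * (T / 2) ^ α := by
      rw [Real.rpow_add ht2, Real.rpow_one]
    have hBTa : B * (T / 2) ^ α < 2 * M0 / T := by
      have h3 : (T / 2) ^ (1 + α) * B < M0 := (lt_div_iff₀ hBpos).mp hlt
      rw [hrr] at h3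
      rw [lt_div_iff₀ hT]
      nlinarith
    have hpt : ∀ t ∈ Icc (0:ℝ) T, |f' t| ≤ 6 * M0 / T := by
      intro t ht
      have hkb := key_bound T α hT hα0 f f' hderiv M0 S hSnn hM0 hSb t ht (T/2) ht2 le_rfl
      have e1 : 2 * M0 / (T / 2) = 4 * M0 / T := by
        field_simp; ring
      have e2 : S * (T / 2) ^ α ≤ B * (T / 2) ^ α :=
        mul_le_mul_of_nonneg_right hSleB (Real.rpow_nonneg ht2.le α)
      rw [e1] at hkb
      have : 4 * M0 / T + 2 * M0 / T = 6 * M0 / T := by ring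
      linarith
    have hM1le : M1 ≤ 6 * M0 / T := by
      apply csSup_le hf'ne
      rintro _ ⟨t, ht, rfl⟩
      exact hpt t ht
    have hMT : 0 ≤ M0 / T := by positivity
    have e3 : 8 / T * M0 = 6 * (M0 / T) + 2 * (M0 / T) := by ring
    have e4 : 6 * M0 / T = 6 * (M0 / T) := by ring
    linarith
end
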